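/- Let Q1 and Q2 be probability measures on the real line. If Q1 ≤_lr Q2 and Q2 ≤_lr Q1, then Q1 = Q2 (antisymmetry of the likelihood ratio order). -/

import Mathlib

open MeasureTheory Set Filter

noncomputable section

/-- `g` is a (measurable, nonnegative) density of `Q` with respect to `μ`,
i.e. `Q B = ∫_B g dμ` for all Borel sets `B`. -/
def IsDensity (Q μ : Measure ℝ) (g : ℝ → ENNReal) : Prop :=
  Measurable g ∧ ∀ B : Set ℝ, MeasurableSet B → Q B = ∫⁻ x in B, g x ∂μ

/-- Likelihood ratio order `Q1 ≤_lr Q2`: there exist a σ-finite measure `μ` and densities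
`g1 = dQ1/dμ`, `g2 = dQ2/dμ` such that the ratio `g2/g1` (with values in `[0,∞]`)
is nondecreasing on the set `{g1 + g2 > 0}`. -/
def LikelihoodRatioLE (Q1 Q2 : Measure ℝ) : Prop :=
  ∃ (μ : Measure ℝ) (g1 g2 : ℝ → ENNReal), SigmaFinite μ ∧
    IsDensity Q1 μ g1 ∧ IsDensity Q2 μ g2 ∧
    ∀ x y : ℝ, x ≤ y → 0 < g1 x + g2 x → 0 < g1 y + g2 y →
      g2 x / g1 x ≤ g2 y / g1 y

/-- Cross-multiplication inequality for ENNReal ratios, assuming finiteness. -/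
lemma cross_mul (a b c d : ENNReal) (ha : a ≠ ⊤) (hb : b ≠ ⊤) (hc : c ≠ ⊤) (hd : d ≠ ⊤)
    (h : 0 < a + b → 0 < c + d → a / b ≤ c / d) : a * d ≤ b * c := by
  rcases eq_or_ne a 0 with rfl | ha0
  · simp
  rcases eq_or_ne d 0 with rfl | hd0
  · simp
  have hab : 0 < a + b :=
    lt_of_lt_of_le (pos_iff_ne_zero.2 ha0) le_self_add
  have hcd : 0 < c + d :=
    lt_of_lt_of_le (pos_iff_ne_zero.2 hd0) le_add_self
  have hdiv := h hab hcd
  rcases eq_or_ne b 0 with rfl | hb0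
  · -- a / 0 = ∞, so c / d = ∞, impossible since c ≠ ⊤, d ≠ 0 unless c/d = ⊤ forces...
    have : a / 0 = ⊤ := by simp [ENNReal.div_zero ha0]
    rw [this, top_le_iff] at hdiv
    have : c = ⊤ := by
      by_contra hct
      exact (ENNReal.div_lt_top hct hd0).ne hdiv
    exact absurd this hc
  · -- b ≠ 0, d ≠ 0, all finite
    rw [ENNReal.div_le_iff hb0 hb] at hdiv
    calc a * d ≤ c / d * b * d := by
          exact mul_le_mul_of_nonneg_right hdiv zero_le
      _ = c / d * d * b := by ring
      _ = c * b := by rw [ENNReal.div_mul_cancel hd0 hd]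
      _ = b * c := mul_comm _ _

/-- Likelihood ratio order implies the CDF inequality `Q2 (Iic t) ≤ Q1 (Iic t)`. -/
lemma lr_cdf (Q1 Q2 : Measure ℝ) [IsProbabilityMeasure Q1] [IsProbabilityMeasure Q2]
    (h : LikelihoodRatioLE Q1 Q2) (t : ℝ) : Q2 (Iic t) ≤ Q1 (Iic t) := by
  obtain ⟨μ, g1, g2, hσ, ⟨mg1, hg1⟩, ⟨mg2, hg2⟩, hmono⟩ := h
  have hQ1univ : Q1 univ = ∫⁻ x, g1 x ∂μ := by
    simpa using hg1 univ MeasurableSet.univ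
  have hQ2univ : Q2 univ = ∫⁻ x, g2 x ∂μ := by
    simpa using hg2 univ MeasurableSet.univ
  have hint1 : ∫⁻ x, g1 x ∂μ ≠ ⊤ := by
    rw [← hQ1univ, measure_univ]; exact ENNReal.one_ne_top
  have hint2 : ∫⁻ x, g2 x ∂μ ≠ ⊤ := by
    rw [← hQ2univ, measure_univ]; exact ENNReal.one_ne_top
  have hae1 : ∀ᵐ x ∂μ, g1 x < ⊤ := ae_lt_top mg1 hint1
  have hae2 : ∀ᵐ x ∂μ, g2 x < ⊤ := ae_lt_top mg2 hint2
  set A : Set ℝ := Iic t with hA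
  set B : Set ℝ := Ioi t with hB
  -- key inequality : Q2 A * Q1 B ≤ Q1 A * Q2 B
  have key : Q2 A * Q1 B ≤ Q1 A * Q2 B := by
    rw [hg1 A measurableSet_Iic, hg2 A measurableSet_Iic,
        hg1 B measurableSet_Ioi, hg2 B measurableSet_Ioi]
    rw [← lintegral_mul_const _ mg2, ← lintegral_mul_const _ mg1]
    refine setLIntegral_mono_ae ((mg1.mul_const _).aemeasurable.restrict) ?_
    filter_upwards [hae1, hae2] with x hx1 hx2 hxA
    -- goal : g2 x * ∫⁻ y in B, g1 y ∂μ ≤ g1 x * ∫⁻ y in B, g2 y ∂μ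
    calc g2 x * ∫⁻ y in B, g1 y ∂μ
        = ∫⁻ y in B, g2 x * g1 y ∂μ := (lintegral_const_mul _ mg1).symm
      _ ≤ ∫⁻ y in B, g1 x * g2 y ∂μ := by
          refine setLIntegral_mono_ae ((mg2.const_mul _).aemeasurable.restrict) ?_
          filter_upwards [hae1, hae2] with y hy1 hy2 hyB
          have hxy : x ≤ y := le_trans hxA (le_of_lt hyB)
          exact cross_mul (g2 x) (g1 x) (g2 y) (g1 y) hx2.ne hx1.ne hy2.ne hy1.ne
            (fun h1 h2 => hmono x y hxy (by rwa [add_comm] at h1) (by rwa [add_comm] at h2))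
      _ = g1 x * ∫⁻ y in B, g2 y ∂μ := lintegral_const_mul _ mg2
  -- use Q A + Q B = 1
  have hone1 : Q1 A + Q1 B = 1 := by
    rw [← measure_union (Iic_disjoint_Ioi le_rfl) measurableSet_Ioi, Iic_union_Ioi, measure_univ]
  have hone2 : Q2 A + Q2 B = 1 := by
    rw [← measure_union (Iic_disjoint_Ioi le_rfl) measurableSet_Ioi, Iic_union_Ioi, measure_univ]
  calc Q2 A = Q2 A * (Q1 A + Q1 B) := by rw [hone1, mul_one]
    _ = Q2 A * Q1 A + Q2 A * Q1 B := by rw [mul_add]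
    _ ≤ Q2 A * Q1 A + Q1 A * Q2 B := add_le_add_right key _
    _ = Q1 A * (Q2 A + Q2 B) := by ring
    _ = Q1 A := by rw [hone2, mul_one]

theorem stmt_9 (Q1 Q2 : Measure ℝ) [IsProbabilityMeasure Q1] [IsProbabilityMeasure Q2]
    (h12 : LikelihoodRatioLE Q1 Q2) (h21 : LikelihoodRatioLE Q2 Q1) :
    Q1 = Q2 := by
  refine Measure.ext_of_Iic Q1 Q2 (fun t => ?_)
  exact le_antisymm (lr_cdf Q2 Q1 h21 t) (lr_cdf Q1 Q2 h12 t)
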